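/- Let G be a simply connected nilpotent Lie group in logarithmic coordinates ℝ^m with adapted basis of degrees d₁, …, d_m and quasi-norm |g|_m = max_i |x_i|^{1/d_i}. If g_n, h_n ∈ G are sequences with |g_n|_m = o(n) and |h_n|_m = O(n), then the commutators satisfy |g_n^{-1} h_n^{-1} g_n h_n|_m = o(n). -/

import Mathlib

open Filter

open Filter MvPolynomial

namespace Stmt9Aux

variable {σ τ : Type*}

lemma wtd_le_iff {w : σ → ℕ} {p : MvPolynomial σ ℝ} {D : ℕ} :
    p.weightedTotalDegree w ≤ D ↔ ∀ v ∈ p.support, Finsupp.weight w v ≤ D := by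
  rw [weightedTotalDegree]
  exact Finset.sup_le_iff

lemma wtd_mul_le {w : σ → ℕ} (p q : MvPolynomial σ ℝ) :
    (p * q).weightedTotalDegree w ≤ p.weightedTotalDegree w + q.weightedTotalDegree w := by
  classical
  rw [wtd_le_iff]
  intro v hv
  have := MvPolynomial.support_mul p q hv
  rw [Finset.mem_add] at this
  obtain ⟨a, ha, b, hb, rfl⟩ := this
  rw [map_add]
  exact add_le_add (le_weightedTotalDegree w ha) (le_weightedTotalDegree w hb)

lemma wtd_one_le {w : σ → ℕ} : (1 : MvPolynomial σ ℝ).weightedTotalDegree w ≤ 0 := by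
  classical
  rw [wtd_le_iff]
  intro v hv
  have : v = 0 := by
    by_contra hne
    simp [MvPolynomial.mem_support_iff, MvPolynomial.coeff_one, hne] at hv
  simp [this]

lemma wtd_C_mul_le {w : σ → ℕ} (c : ℝ) (p : MvPolynomial σ ℝ) :
    (C c * p).weightedTotalDegree w ≤ p.weightedTotalDegree w := by
  rw [wtd_le_iff]
  intro v hv
  rw [← smul_eq_C_mul] at hv
  exact le_weightedTotalDegree w (Finsupp.support_smul hv)

lemma wtd_pow_le {w : σ → ℕ} (p : MvPolynomial σ ℝ) (k : ℕ) :
    (p ^ k).weightedTotalDegree w ≤ k * p.weightedTotalDegree w := by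
  induction k with
  | zero => simpa using wtd_one_le
  | succ k ih =>
      rw [pow_succ]
      calc (p ^ k * p).weightedTotalDegree w
          ≤ (p ^ k).weightedTotalDegree w + p.weightedTotalDegree w := wtd_mul_le _ _
        _ ≤ k * p.weightedTotalDegree w + p.weightedTotalDegree w := by gcongr
        _ = (k + 1) * p.weightedTotalDegree w := by ring

lemma wtd_sum_le {w : σ → ℕ} {α : Type*} (s : Finset α) (f : α → MvPolynomial σ ℝ) (D : ℕ)
    (hf : ∀ a ∈ s, (f a).weightedTotalDegree w ≤ D) :
    (∑ a ∈ s, f a).weightedTotalDegree w ≤ D := by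
  classical
  rw [wtd_le_iff]
  intro v hv
  have := MvPolynomial.support_sum hv
  rw [Finset.mem_biUnion] at this
  obtain ⟨a, ha, hva⟩ := this
  exact le_trans (le_weightedTotalDegree w hva) (hf a ha)

lemma wtd_prod_le {w : σ → ℕ} {α : Type*} (s : Finset α) (f : α → MvPolynomial σ ℝ)
    (D : α → ℕ) (hf : ∀ a ∈ s, (f a).weightedTotalDegree w ≤ D a) :
    (∏ a ∈ s, f a).weightedTotalDegree w ≤ ∑ a ∈ s, D a := by
  classical
  induction s using Finset.induction with
  | empty => simpa using wtd_one_le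
  | insert _ _ hnotmem ih =>
      rename_i a s
      rw [Finset.prod_insert hnotmem, Finset.sum_insert hnotmem]
      calc (f a * ∏ b ∈ s, f b).weightedTotalDegree w
          ≤ (f a).weightedTotalDegree w + (∏ b ∈ s, f b).weightedTotalDegree w := wtd_mul_le _ _
        _ ≤ D a + ∑ b ∈ s, D b := add_le_add (hf a (Finset.mem_insert_self a s))
            (ih fun b hb => hf b (Finset.mem_insert_of_mem hb))

lemma weight_eq_sum {w : σ → ℕ} [Fintype σ] (v : σ →₀ ℕ) :
    Finsupp.weight w v = ∑ i : σ, v i * w i := by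
  rw [Finsupp.weight_apply, Finsupp.sum_fintype]
  · simp [smul_eq_mul]
  · intro i; simp

lemma wtd_aeval_le {w : σ → ℕ} {w' : τ → ℕ} [Fintype σ] {φ : σ → MvPolynomial τ ℝ}
    (hφ : ∀ s, (φ s).weightedTotalDegree w' ≤ w s) (P : MvPolynomial σ ℝ) :
    (aeval φ P).weightedTotalDegree w' ≤ P.weightedTotalDegree w := by
  classical
  conv_lhs => rw [P.as_sum, map_sum]
  apply wtd_sum_le
  intro v hv
  rw [aeval_monomial]
  calc ((algebraMap ℝ (MvPolynomial τ ℝ)) (coeff v P) * v.prod fun s k => φ s ^ k).weightedTotalDegree w'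
      ≤ ((algebraMap ℝ (MvPolynomial τ ℝ)) (coeff v P)).weightedTotalDegree w'
        + (v.prod fun s k => φ s ^ k).weightedTotalDegree w' := wtd_mul_le _ _
    _ ≤ 0 + Finsupp.weight w v := by
        apply add_le_add
        · have : (algebraMap ℝ (MvPolynomial τ ℝ)) (coeff v P) = C (coeff v P) * 1 := by
            simp [algebraMap_eq]
          rw [this]
          exact le_trans (wtd_C_mul_le _ _) wtd_one_le
        · rw [Finsupp.prod, Finsupp.weight_apply, Finsupp.sum]
          apply wtd_prod_le
          intro s hs
          calc (φ s ^ v s).weightedTotalDegree w' ≤ v s * (φ s).weightedTotalDegree w' :=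
              wtd_pow_le _ _
            _ ≤ v s * w s := by gcongr; exact hφ s
            _ = v s • w s := by rw [smul_eq_mul]
    _ = Finsupp.weight w v := zero_add _
    _ ≤ P.weightedTotalDegree w := le_weightedTotalDegree w hv

lemma eval_aeval' (v : τ → ℝ) (φ : σ → MvPolynomial τ ℝ) (P : MvPolynomial σ ℝ) :
    eval v (aeval φ P) = eval (fun s => eval v (φ s)) P := by
  rw [aeval_def, eval_eval₂]
  rw [MvPolynomial.eval₂_eq, MvPolynomial.eval_eq]
  apply Finset.sum_congr rfl
  intro u _
  simp

end Stmt9Aux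

namespace Stmt9Aux2
open Stmt9Aux

variable {m : ℕ}

/-- A coordinate function admitting a polynomial representation of weighted degree ≤ k. -/
def GoodCoord (d : Fin m → ℕ) (k : ℕ) (f : (Fin m → ℝ) → (Fin m → ℝ) → ℝ) : Prop :=
  ∃ P : MvPolynomial (Fin m ⊕ Fin m) ℝ,
    (∀ x y, f x y = eval (Sum.elim x y) P) ∧ P.weightedTotalDegree (Sum.elim d d) ≤ k

lemma wtd_X_le {σ : Type*} {w : σ → ℕ} (s : σ) :
    (X s : MvPolynomial σ ℝ).weightedTotalDegree w ≤ w s := by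
  rw [wtd_le_iff]
  intro v hv
  rw [MvPolynomial.support_X] at hv
  simp only [Finset.mem_singleton] at hv
  subst hv
  simp [Finsupp.weight_apply, Finsupp.sum_single_index]

lemma good_projl (d : Fin m → ℕ) (t : Fin m) :
    GoodCoord d (d t) (fun x _ => x t) := by
  refine ⟨X (Sum.inl t), ?_, wtd_X_le _⟩
  intro x y; simp

lemma good_projr (d : Fin m → ℕ) (t : Fin m) :
    GoodCoord d (d t) (fun _ y => y t) := by
  refine ⟨X (Sum.inr t), ?_, wtd_X_le _⟩
  intro x y; simp

lemma good_neg {d : Fin m → ℕ} {k : ℕ} {f} (hf : GoodCoord d k f) :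
    GoodCoord d k (fun x y => -(f x y)) := by
  obtain ⟨P, hPe, hPd⟩ := hf
  refine ⟨-P, ?_, ?_⟩
  · intro x y; simp [hPe]
  · rw [wtd_le_iff] at hPd ⊢
    intro v hv
    rw [MvPolynomial.support_neg] at hv
    exact hPd v hv

lemma good_mul {d : Fin m → ℕ} {mul : (Fin m → ℝ) → (Fin m → ℝ) → (Fin m → ℝ)}
    (hpoly : ∀ t : Fin m, ∃ P : MvPolynomial (Fin m ⊕ Fin m) ℝ,
      (∀ x y, mul x y t = MvPolynomial.eval (Sum.elim x y) P) ∧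
      P.weightedTotalDegree (Sum.elim d d) ≤ d t)
    {A B : (Fin m → ℝ) → (Fin m → ℝ) → (Fin m → ℝ)}
    (hA : ∀ t, GoodCoord d (d t) (fun x y => A x y t))
    (hB : ∀ t, GoodCoord d (d t) (fun x y => B x y t)) :
    ∀ t, GoodCoord d (d t) (fun x y => mul (A x y) (B x y) t) := by
  choose PA hPAe hPAd using hA
  choose PB hPBe hPBd using hB
  intro t
  obtain ⟨P, hPe, hPd⟩ := hpoly t
  refine ⟨aeval (Sum.elim PA PB) P, ?_, ?_⟩
  · intro x y
    show mul (A x y) (B x y) t = _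
    rw [hPe, eval_aeval']
    have : (Sum.elim (A x y) (B x y)) = fun s => eval (Sum.elim x y) (Sum.elim PA PB s) := by
      funext s
      cases s with
      | inl s => simpa using hPAe s x y
      | inr s => simpa using hPBe s x y
    rw [this]
  · refine le_trans (wtd_aeval_le ?_ P) hPd
    intro s
    cases s with
    | inl s => simpa using hPAd s
    | inr s => simpa using hPBd s

end Stmt9Aux2

namespace Stmt9Aux3
open Stmt9Aux

lemma keyEst {m : ℕ} (d : Fin m → ℕ) (hd : ∀ i, 1 ≤ d i) {D : ℕ}
    (Q : MvPolynomial (Fin m ⊕ Fin m) ℝ)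
    (hQd : Q.weightedTotalDegree (Sum.elim d d) ≤ D)
    (hQ0 : ∀ y : Fin m → ℝ, eval (Sum.elim (0 : Fin m → ℝ) y) Q = 0)
    {x y : Fin m → ℝ} {ε C n : ℝ} (hε0 : 0 < ε) (hε1 : ε ≤ 1) (hC : 1 ≤ C) (hn : 1 ≤ n)
    (hx : ∀ i, |x i| ≤ (ε * n) ^ d i) (hy : ∀ i, |y i| ≤ (C * n) ^ d i) :
    |eval (Sum.elim x y) Q| ≤ (∑ v ∈ Q.support, |coeff v Q|) * (ε * C ^ D * n ^ D) := by
  classical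
  have hn0 : (0:ℝ) ≤ n := le_trans zero_le_one hn
  have hεn : (0:ℝ) ≤ ε * n := mul_nonneg hε0.le hn0
  have hCn : (0:ℝ) ≤ C * n := mul_nonneg (le_trans zero_le_one hC) hn0
  set p : (Fin m ⊕ Fin m →₀ ℕ) → Prop := fun v => ∀ i, v (Sum.inl i) = 0 with hp
  set t1 : (Fin m ⊕ Fin m →₀ ℕ) → ℝ :=
    fun v => coeff v Q * ∏ i, (Sum.elim x y i) ^ v i with ht1
  set t0 : (Fin m ⊕ Fin m →₀ ℕ) → ℝ :=
    fun v => coeff v Q * ∏ i, (Sum.elim (0 : Fin m → ℝ) y i) ^ v i with ht0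
  have heval : eval (Sum.elim x y) Q = ∑ v ∈ Q.support, t1 v := eval_eq' _ _
  have heval0 : (0:ℝ) = ∑ v ∈ Q.support, t0 v := by rw [← eval_eq']; exact (hQ0 y).symm
  -- terms without left variables agree at x and at 0
  have hagree : ∀ v ∈ Q.support.filter p, t1 v = t0 v := by
    intro v hv
    rw [Finset.mem_filter] at hv
    have hz : ∀ (z : Fin m → ℝ), ∏ a, (z a) ^ v (Sum.inl a) = 1 :=
      fun z => Finset.prod_eq_one (fun a _ => by rw [hv.2 a, pow_zero])
    simp only [ht1, ht0]
    congr 1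
    rw [Fintype.prod_sum_type, Fintype.prod_sum_type]
    simp only [Sum.elim_inl, Sum.elim_inr]
    rw [hz x, hz 0]
  -- terms with left variables vanish at 0
  have hzero : ∀ v ∈ Q.support.filter (fun v => ¬ p v), t0 v = 0 := by
    intro v hv
    rw [Finset.mem_filter] at hv
    obtain ⟨i, hi⟩ := not_forall.mp hv.2
    have : (Sum.elim (0 : Fin m → ℝ) y (Sum.inl i)) ^ v (Sum.inl i) = 0 := by
      simp only [Sum.elim_inl, Pi.zero_apply]
      exact zero_pow hi
    simp only [ht0]
    rw [Finset.prod_eq_zero (Finset.mem_univ (Sum.inl i)) this, mul_zero]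
  have hsum0 : ∑ v ∈ Q.support.filter p, t1 v = 0 := by
    rw [Finset.sum_congr rfl hagree]
    have := (Finset.sum_filter_add_sum_filter_not Q.support p t0)
    rw [Finset.sum_eq_zero hzero, add_zero] at this
    rw [this, ← heval0]
  have hsplit : eval (Sum.elim x y) Q = ∑ v ∈ Q.support.filter (fun v => ¬ p v), t1 v := by
    rw [heval, ← Finset.sum_filter_add_sum_filter_not Q.support p t1, hsum0, zero_add]
  rw [hsplit]
  -- bound each remaining term
  have hterm : ∀ v ∈ Q.support.filter (fun v => ¬ p v),
      |t1 v| ≤ |coeff v Q| * (ε * C ^ D * n ^ D) := by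
    intro v hv
    rw [Finset.mem_filter] at hv
    obtain ⟨i0, hi0⟩ := not_forall.mp hv.2
    set A : ℕ := ∑ a, d a * v (Sum.inl a) with hA
    set B : ℕ := ∑ b, d b * v (Sum.inr b) with hB
    have hAB : A + B ≤ D := by
      have hw : Finsupp.weight (Sum.elim d d) v = A + B := by
        rw [weight_eq_sum, Fintype.sum_sum_type]
        simp only [Sum.elim_inl, Sum.elim_inr, hA, hB]
        congr 1 <;> exact Finset.sum_congr rfl (fun a _ => mul_comm _ _)
      have := le_trans (le_weightedTotalDegree (Sum.elim d d) hv.1) hQd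
      omega
    have hA1 : 1 ≤ A := by
      have h1 : d i0 * v (Sum.inl i0) ≤ A :=
        Finset.single_le_sum (f := fun a => d a * v (Sum.inl a))
          (fun a _ => Nat.zero_le _) (Finset.mem_univ i0)
      have := hd i0
      have hv1 : 1 ≤ v (Sum.inl i0) := Nat.one_le_iff_ne_zero.mpr hi0
      nlinarith
    have hprod : |∏ i, (Sum.elim x y i) ^ v i| ≤ (ε * n) ^ A * (C * n) ^ B := by
      rw [Finset.abs_prod]
      simp only [abs_pow]
      rw [Fintype.prod_sum_type]
      simp only [Sum.elim_inl, Sum.elim_inr]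
      have hxp : ∏ a, |x a| ^ v (Sum.inl a) ≤ (ε * n) ^ A := by
        rw [hA, ← Finset.prod_pow_eq_pow_sum]
        apply Finset.prod_le_prod (fun a _ => pow_nonneg (abs_nonneg _) _)
        intro a _
        rw [pow_mul]
        exact pow_le_pow_left₀ (abs_nonneg _) (hx a) _
      have hyp : ∏ b, |y b| ^ v (Sum.inr b) ≤ (C * n) ^ B := by
        rw [hB, ← Finset.prod_pow_eq_pow_sum]
        apply Finset.prod_le_prod (fun b _ => pow_nonneg (abs_nonneg _) _)
        intro b _
        rw [pow_mul]
        exact pow_le_pow_left₀ (abs_nonneg _) (hy b) _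
      exact mul_le_mul hxp hyp (Finset.prod_nonneg (fun b _ => pow_nonneg (abs_nonneg _) _))
        (pow_nonneg hεn _)
    have hfinal : (ε * n) ^ A * (C * n) ^ B ≤ ε * C ^ D * n ^ D := by
      have : (ε * n) ^ A * (C * n) ^ B = ε ^ A * C ^ B * n ^ (A + B) := by
        rw [mul_pow, mul_pow, pow_add]; ring
      rw [this]
      have h1 : ε ^ A ≤ ε := by
        simpa using pow_le_pow_of_le_one hε0.le hε1 hA1
      have h2 : C ^ B ≤ C ^ D := pow_le_pow_right₀ hC (le_trans (Nat.le_add_left B A) hAB)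
      have h3 : n ^ (A + B) ≤ n ^ D := pow_le_pow_right₀ hn hAB
      have hCB : (0:ℝ) ≤ C ^ B := pow_nonneg (le_trans zero_le_one hC) _
      have hnAB : (0:ℝ) ≤ n ^ (A + B) := pow_nonneg hn0 _
      calc ε ^ A * C ^ B * n ^ (A + B) ≤ ε * C ^ B * n ^ (A + B) := by
            apply mul_le_mul_of_nonneg_right (mul_le_mul_of_nonneg_right h1 hCB) hnAB
        _ ≤ ε * C ^ D * n ^ (A + B) := by
            apply mul_le_mul_of_nonneg_right (mul_le_mul_of_nonneg_left h2 hε0.le) hnAB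
        _ ≤ ε * C ^ D * n ^ D := by
            apply mul_le_mul_of_nonneg_left h3
            exact mul_nonneg hε0.le (pow_nonneg (le_trans zero_le_one hC) _)
    calc |t1 v| = |coeff v Q| * |∏ i, (Sum.elim x y i) ^ v i| := abs_mul _ _
      _ ≤ |coeff v Q| * ((ε * n) ^ A * (C * n) ^ B) :=
          mul_le_mul_of_nonneg_left hprod (abs_nonneg _)
      _ ≤ |coeff v Q| * (ε * C ^ D * n ^ D) :=
          mul_le_mul_of_nonneg_left hfinal (abs_nonneg _)
  calc |∑ v ∈ Q.support.filter (fun v => ¬ p v), t1 v|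
      ≤ ∑ v ∈ Q.support.filter (fun v => ¬ p v), |t1 v| := Finset.abs_sum_le_sum_abs _ _
    _ ≤ ∑ v ∈ Q.support.filter (fun v => ¬ p v), |coeff v Q| * (ε * C ^ D * n ^ D) :=
        Finset.sum_le_sum hterm
    _ ≤ ∑ v ∈ Q.support, |coeff v Q| * (ε * C ^ D * n ^ D) := by
        apply Finset.sum_le_sum_of_subset_of_nonneg (Finset.filter_subset _ _)
        intro v _ _
        apply mul_nonneg (abs_nonneg _)
        apply mul_nonneg (mul_nonneg hε0.le (pow_nonneg (le_trans zero_le_one hC) _))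
          (pow_nonneg hn0 _)
    _ = (∑ v ∈ Q.support, |coeff v Q|) * (ε * C ^ D * n ^ D) := (Finset.sum_mul _ _ _).symm

end Stmt9Aux3

open Filter

/-- In logarithmic coordinates `ℝ^m` of a simply connected nilpotent
Lie group (group law `mul` polynomial with weighted degree ≤ `d t` in coordinate `t`,
identity `0`, inverse `-x`), with quasi-norm `max_i |x_i|^(1/dᵢ)`: if `|gₙ|_m = o(n)`
and `|hₙ|_m = O(n)` then `|gₙ⁻¹ hₙ⁻¹ gₙ hₙ|_m = o(n)`. -/
theorem stmt9 {m : ℕ} (d : Fin m → ℕ) (hd : ∀ i, 1 ≤ d i)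
    (mul : (Fin m → ℝ) → (Fin m → ℝ) → (Fin m → ℝ))
    (hassoc : ∀ x y z, mul (mul x y) z = mul x (mul y z))
    (hone : ∀ x, mul x 0 = x ∧ mul 0 x = x)
    (hinv : ∀ x, mul x (-x) = 0 ∧ mul (-x) x = 0)
    (hpoly : ∀ t : Fin m, ∃ P : MvPolynomial (Fin m ⊕ Fin m) ℝ,
      (∀ x y, mul x y t = MvPolynomial.eval (Sum.elim x y) P) ∧
      P.weightedTotalDegree (Sum.elim d d) ≤ d t)
    (g h : ℕ → Fin m → ℝ)
    (hg : ∀ ε : ℝ, 0 < ε → ∀ᶠ n : ℕ in atTop,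
      (⨆ i : Fin m, |g n i| ^ ((d i : ℝ)⁻¹)) ≤ ε * n)
    (hh : ∃ C : ℝ, ∀ᶠ n : ℕ in atTop,
      (⨆ i : Fin m, |h n i| ^ ((d i : ℝ)⁻¹)) ≤ C * n) :
    ∀ ε : ℝ, 0 < ε → ∀ᶠ n : ℕ in atTop,
      (⨆ i : Fin m,
        |mul (mul (mul (-(g n)) (-(h n))) (g n)) (h n) i| ^ ((d i : ℝ)⁻¹)) ≤ ε * n := by
  classical
  intro ε' hε'
  rcases Nat.eq_zero_or_pos m with hm | hm
  · filter_upwards [eventually_ge_atTop 0] with n _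
    refine Real.iSup_le (fun i => absurd i.isLt (by omega)) (by positivity)
  haveI : Nonempty (Fin m) := ⟨⟨0, hm⟩⟩
  -- commutator coordinates are polynomial of weighted degree ≤ d t
  have hgood : ∀ t, Stmt9Aux2.GoodCoord d (d t)
      (fun x y => mul (mul (mul (-x) (-y)) x) y t) := by
    have h1 : ∀ t, Stmt9Aux2.GoodCoord d (d t) (fun x y : Fin m → ℝ => (-x) t) := fun t =>
      Stmt9Aux2.good_neg (Stmt9Aux2.good_projl d t)
    have h2 : ∀ t, Stmt9Aux2.GoodCoord d (d t) (fun x y : Fin m → ℝ => (-y) t) := fun t =>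
      Stmt9Aux2.good_neg (Stmt9Aux2.good_projr d t)
    have h3 := Stmt9Aux2.good_mul hpoly (A := fun x _ => -x) (B := fun _ y => -y) h1 h2
    have h4 := Stmt9Aux2.good_mul hpoly (A := fun x y => mul (-x) (-y)) (B := fun x _ => x)
      h3 (fun t => Stmt9Aux2.good_projl d t)
    exact Stmt9Aux2.good_mul hpoly (A := fun x y => mul (mul (-x) (-y)) x) (B := fun _ y => y)
      h4 (fun t => Stmt9Aux2.good_projr d t)
  choose Q hQe hQd using hgood
  have hQe' : ∀ t (x y : Fin m → ℝ),
      mul (mul (mul (-x) (-y)) x) y t = MvPolynomial.eval (Sum.elim x y) (Q t) := hQe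
  have hQ0 : ∀ t (y : Fin m → ℝ), MvPolynomial.eval (Sum.elim (0 : Fin m → ℝ) y) (Q t) = 0 := by
    intro t y
    rw [← hQe' t 0 y, neg_zero, (hone (-y)).2, (hone (-y)).1, (hinv y).2]
    rfl
  -- constants
  obtain ⟨C0, hC0⟩ := hh
  set C : ℝ := max C0 1 with hCdef
  have hC1 : (1 : ℝ) ≤ C := le_max_right _ _
  have hCpos : (0 : ℝ) < C := lt_of_lt_of_le zero_lt_one hC1
  set K : Fin m → ℝ := fun t => ∑ v ∈ (Q t).support, |MvPolynomial.coeff v (Q t)| with hKdef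
  have hK0 : ∀ t, 0 ≤ K t := fun t => Finset.sum_nonneg (fun v _ => abs_nonneg _)
  -- choice of ε
  set δ : ℝ := Finset.univ.inf' Finset.univ_nonempty
    (fun t => ε' ^ d t / ((K t + 1) * C ^ d t)) with hδdef
  have hδpos : 0 < δ := by
    rw [hδdef, Finset.lt_inf'_iff]
    intro t _
    have := hK0 t
    exact div_pos (pow_pos hε' _) (mul_pos (by linarith) (pow_pos hCpos _))
  set ε : ℝ := min 1 δ with hεdef
  have hε0 : 0 < ε := lt_min one_pos hδpos
  have hε1 : ε ≤ 1 := min_le_left _ _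
  have hchoice : ∀ t, K t * ε * C ^ d t ≤ ε' ^ d t := by
    intro t
    have hεle : ε ≤ ε' ^ d t / ((K t + 1) * C ^ d t) :=
      le_trans (min_le_right _ _) (Finset.inf'_le _ (Finset.mem_univ t))
    have hKC : (0:ℝ) < (K t + 1) * C ^ d t := by
      have := hK0 t
      exact mul_pos (by linarith) (pow_pos hCpos _)
    rw [le_div_iff₀ hKC] at hεle
    have hεC : (0:ℝ) ≤ ε * C ^ d t := mul_nonneg hε0.le (pow_nonneg hCpos.le _)
    calc K t * ε * C ^ d t = K t * (ε * C ^ d t) := by ring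
      _ ≤ (K t + 1) * (ε * C ^ d t) := mul_le_mul_of_nonneg_right (by linarith) hεC
      _ = ε * ((K t + 1) * C ^ d t) := by ring
      _ ≤ ε' ^ d t := hεle
  -- eventual bounds
  filter_upwards [hg ε hε0, hC0, eventually_ge_atTop 1] with n hgn hhn hn1
  have hn1' : (1:ℝ) ≤ (n:ℝ) := by exact_mod_cast hn1
  have hn0 : (0:ℝ) ≤ (n:ℝ) := by linarith
  have hdne : ∀ i : Fin m, (d i : ℝ) ≠ 0 := by
    intro i
    have := hd i
    positivity
  -- pointwise coordinate bounds
  have hgpt : ∀ i, |g n i| ≤ (ε * (n:ℝ)) ^ d i := by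
    intro i
    have hb : BddAbove (Set.range fun i : Fin m => |g n i| ^ ((d i:ℝ)⁻¹)) :=
      Set.Finite.bddAbove (Set.finite_range _)
    have h1 : |g n i| ^ ((d i : ℝ)⁻¹) ≤ ε * n := le_trans (le_ciSup hb i) hgn
    have h2 : (|g n i| ^ ((d i : ℝ)⁻¹)) ^ (d i) ≤ (ε * (n:ℝ)) ^ d i :=
      pow_le_pow_left₀ (Real.rpow_nonneg (abs_nonneg _) _) h1 _
    calc |g n i| = (|g n i| ^ ((d i : ℝ)⁻¹)) ^ (d i) := by
          rw [← Real.rpow_natCast (|g n i| ^ ((d i : ℝ)⁻¹)) (d i),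
            ← Real.rpow_mul (abs_nonneg _), inv_mul_cancel₀ (hdne i), Real.rpow_one]
      _ ≤ (ε * (n:ℝ)) ^ d i := h2
  have hhpt : ∀ i, |h n i| ≤ (C * (n:ℝ)) ^ d i := by
    intro i
    have hb : BddAbove (Set.range fun i : Fin m => |h n i| ^ ((d i:ℝ)⁻¹)) :=
      Set.Finite.bddAbove (Set.finite_range _)
    have h1 : |h n i| ^ ((d i : ℝ)⁻¹) ≤ C * n := by
      refine le_trans (le_trans (le_ciSup hb i) hhn) ?_
      exact mul_le_mul_of_nonneg_right (le_max_left _ _) hn0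
    have h2 : (|h n i| ^ ((d i : ℝ)⁻¹)) ^ (d i) ≤ (C * (n:ℝ)) ^ d i :=
      pow_le_pow_left₀ (Real.rpow_nonneg (abs_nonneg _) _) h1 _
    calc |h n i| = (|h n i| ^ ((d i : ℝ)⁻¹)) ^ (d i) := by
          rw [← Real.rpow_natCast (|h n i| ^ ((d i : ℝ)⁻¹)) (d i),
            ← Real.rpow_mul (abs_nonneg _), inv_mul_cancel₀ (hdne i), Real.rpow_one]
      _ ≤ (C * (n:ℝ)) ^ d i := h2
  -- key estimate per coordinate
  have hcomm : ∀ t, |mul (mul (mul (-(g n)) (-(h n))) (g n)) (h n) t| ≤ (ε' * (n:ℝ)) ^ d t := by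
    intro t
    rw [hQe' t (g n) (h n)]
    calc |MvPolynomial.eval (Sum.elim (g n) (h n)) (Q t)|
        ≤ K t * (ε * C ^ d t * (n:ℝ) ^ d t) :=
          Stmt9Aux3.keyEst d hd (Q t) (hQd t) (hQ0 t) hε0 hε1 hC1 hn1' hgpt hhpt
      _ = (K t * ε * C ^ d t) * (n:ℝ) ^ d t := by ring
      _ ≤ ε' ^ d t * (n:ℝ) ^ d t :=
          mul_le_mul_of_nonneg_right (hchoice t) (pow_nonneg hn0 _)
      _ = (ε' * (n:ℝ)) ^ d t := (mul_pow _ _ _).symm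
  refine Real.iSup_le (fun t => ?_) (by positivity)
  have h2 : |mul (mul (mul (-(g n)) (-(h n))) (g n)) (h n) t| ^ ((d t : ℝ)⁻¹)
      ≤ ((ε' * (n:ℝ)) ^ d t) ^ ((d t : ℝ)⁻¹) :=
    Real.rpow_le_rpow (abs_nonneg _) (hcomm t) (by positivity)
  have h3 : ((ε' * (n:ℝ)) ^ d t) ^ ((d t : ℝ)⁻¹) = ε' * (n:ℝ) := by
    rw [← Real.rpow_natCast (ε' * (n:ℝ)) (d t), ← Real.rpow_mul (by positivity),
      mul_inv_cancel₀ (hdne t), Real.rpow_one]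
  rw [h3] at h2
  exact h2
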